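/- Let M₁ = (V, I₁) and M₂ = (V, I₂) be matroids, S ∈ I₁ ∩ I₂, and let r be the maximum size of a common independent set. If every path from s to t in the exchange graph G(S) has length at least 2ℓ+2 (in number of arcs), then |S| ≥ (1 - 1/(ℓ+1)) · r. In particular if no (s,t)-path exists then |S| = r. -/

import Mathlib

open Finset

/-- A matroid on a finite ground type `V`, given by its independent sets. -/
structure FinMatroid (V : Type*) [DecidableEq V] [Fintype V] where
  Indep : Finset V → Prop
  indep_empty : Indep ∅
  indep_subset : ∀ ⦃A B : Finset V⦄, Indep B → A ⊆ B → Indep A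
  indep_exchange : ∀ ⦃A B : Finset V⦄, Indep A → Indep B → B.card < A.card →
    ∃ x ∈ A \ B, Indep (insert x B)

open scoped Classical in
/-- The rank of a set: the size of a largest independent subset. -/
noncomputable def FinMatroid.rk {V : Type*} [DecidableEq V] [Fintype V]
    (M : FinMatroid V) (A : Finset V) : ℕ :=
  (A.powerset.filter fun T => M.Indep T).sup Finset.card

variable {V : Type*} [DecidableEq V] [Fintype V]

/-- An arc of the exchange graph G(S); vertices are V ⊕ Bool, where
Sum.inr false = s and Sum.inr true = t. -/
def ExArc (M1 M2 : FinMatroid V) (S : Finset V) : V ⊕ Bool → V ⊕ Bool → Prop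
  | Sum.inr false, Sum.inl b => b ∉ S ∧ M1.Indep (insert b S)
  | Sum.inl b, Sum.inr true => b ∉ S ∧ M2.Indep (insert b S)
  | Sum.inl x, Sum.inl y =>
      (x ∈ S ∧ y ∉ S ∧ M1.Indep (insert y (S.erase x))) ∨
      (x ∉ S ∧ y ∈ S ∧ M2.Indep (insert x (S.erase y)))
  | _, _ => False

/-- Reachability from `s` by a walk of exactly `n` arcs. -/
def ExReach (M1 M2 : FinMatroid V) (S : Finset V) (n : ℕ) (v : V ⊕ Bool) : Prop :=
  ∃ p : ℕ → V ⊕ Bool, p 0 = Sum.inr false ∧ p n = v ∧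
    ∀ i < n, ExArc M1 M2 S (p i) (p (i+1))

lemma exReach_zero (M1 M2 : FinMatroid V) (S : Finset V) :
    ExReach M1 M2 S 0 (Sum.inr false) :=
  ⟨fun _ => Sum.inr false, rfl, rfl, fun i hi => by omega⟩

lemma exReach_succ {M1 M2 : FinMatroid V} {S : Finset V} {n : ℕ} {u v : V ⊕ Bool}
    (h : ExReach M1 M2 S n u) (ha : ExArc M1 M2 S u v) :
    ExReach M1 M2 S (n+1) v := by
  obtain ⟨p, hp0, hpn, hparc⟩ := h
  refine ⟨fun i => if i ≤ n then p i else v, by simp [hp0], by simp, ?_⟩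
  intro i hi
  rcases lt_or_eq_of_le (Nat.lt_succ_iff.mp hi) with hlt | heq
  · simp only [if_pos (le_of_lt hlt), if_pos (Nat.succ_le_of_lt hlt)]
    exact hparc i hlt
  · subst heq
    simp only [le_refl, if_pos, if_neg (by omega : ¬ i + 1 ≤ i), hpn]
    exact ha

lemma exReach_succ_iff {M1 M2 : FinMatroid V} {S : Finset V} {n : ℕ} {v : V ⊕ Bool}
    (h : ExReach M1 M2 S (n+1) v) :
    ∃ u, ExReach M1 M2 S n u ∧ ExArc M1 M2 S u v := by
  obtain ⟨p, hp0, hpn, hparc⟩ := h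
  exact ⟨p n, ⟨p, hp0, rfl, fun i hi => hparc i (by omega)⟩, hpn ▸ hparc n (by omega)⟩

/-- Parity indicator: `true` exactly on vertices of `V` not in `S`. -/
def gpar (S : Finset V) : V ⊕ Bool → Bool
  | Sum.inl x => decide (x ∉ S)
  | Sum.inr _ => false

lemma exArc_flip {M1 M2 : FinMatroid V} {S : Finset V} {u v : V ⊕ Bool}
    (h : ExArc M1 M2 S u v) : gpar S v = !gpar S u := by
  cases u with
  | inl x =>
    cases v with
    | inl y =>
      rcases h with ⟨hx, hy, -⟩ | ⟨hx, hy, -⟩ <;> simp [gpar, hx, hy]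
    | inr b =>
      cases b with
      | false => exact absurd h id
      | true => obtain ⟨hx, -⟩ := h; simp [gpar, hx]
  | inr b =>
    cases b with
    | false =>
      cases v with
      | inl y => obtain ⟨hy, -⟩ := h; simp [gpar, hy]
      | inr c => cases c <;> exact absurd h id
    | true => cases v with
      | inl y => exact absurd h id
      | inr c => cases c <;> exact absurd h id

lemma exReach_parity {M1 M2 : FinMatroid V} {S : Finset V} :
    ∀ {n : ℕ} {v : V ⊕ Bool}, ExReach M1 M2 S n v → (Even n ↔ gpar S v = false) := by
  intro n
  induction n with
  | zero =>
    intro v h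
    obtain ⟨p, hp0, hpn, -⟩ := h
    rw [← hpn, hp0]
    simp [gpar]
  | succ n ih =>
    intro v h
    obtain ⟨u, hu, ha⟩ := exReach_succ_iff h
    have hflip := exArc_flip ha
    have hiu := ih hu
    constructor
    · intro he
      have hno : ¬ Even n := by
        rcases he with ⟨k, hk⟩
        rintro ⟨m, hm⟩; omega
      have hut : gpar S u = true := by
        rcases Bool.eq_false_or_eq_true (gpar S u) with h' | h'
        · exact h'
        · exact absurd (hiu.mpr h') hno
      simp [hflip, hut]
    · intro hv
      have : gpar S u = true := by
        rw [hflip] at hv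
        rcases Bool.eq_false_or_eq_true (gpar S u) with h' | h' <;> simp [h'] at hv ⊢
      have : ¬ Even n := fun he => by simp [hiu.mp he] at this
      rcases Nat.even_or_odd n with he | ho
      · exact absurd he this
      · rcases ho with ⟨k, hk⟩; exact ⟨k+1, by omega⟩

lemma exReach_even_of_mem {M1 M2 : FinMatroid V} {S : Finset V} {n : ℕ} {a : V}
    (ha : a ∈ S) (h : ExReach M1 M2 S n (Sum.inl a)) : Even n := by
  have := exReach_parity h
  simp [gpar, ha] at this
  exact this

lemma FinMatroid.le_rk {M : FinMatroid V} {X T : Finset V} (hT : T ⊆ X)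
    (hI : M.Indep T) : T.card ≤ M.rk X := by
  classical
  refine Finset.le_sup ?_
  simp only [Finset.mem_filter, Finset.mem_powerset]
  exact ⟨hT, hI⟩

lemma FinMatroid.rk_le {M : FinMatroid V} {X : Finset V} {m : ℕ}
    (h : ∀ T ⊆ X, M.Indep T → T.card ≤ m) : M.rk X ≤ m := by
  classical
  refine Finset.sup_le ?_
  intro T hT
  simp only [Finset.mem_filter, Finset.mem_powerset] at hT
  exact h T hT.1 hT.2

/-- Grow an independent set inside `insert b S` up to size `S.card`. -/
lemma FinMatroid.grow (M : FinMatroid V) {S : Finset V} (hS : M.Indep S) (b : V) :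
    ∀ (k : ℕ) (J : Finset V), M.Indep J → J ⊆ insert b S → S.card ≤ J.card + k →
    ∃ J', M.Indep J' ∧ J ⊆ J' ∧ J' ⊆ insert b S ∧ S.card ≤ J'.card := by
  intro k
  induction k with
  | zero => intro J hJ hJs hc; exact ⟨J, hJ, Finset.Subset.refl J, hJs, by omega⟩
  | succ k ih =>
    intro J hJ hJs hc
    by_cases hle : S.card ≤ J.card
    · exact ⟨J, hJ, Finset.Subset.refl J, hJs, hle⟩
    · push_neg at hle
      obtain ⟨x, hx, hxI⟩ := M.indep_exchange hS hJ hle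
      rw [Finset.mem_sdiff] at hx
      obtain ⟨J', h1, h2, h3, h4⟩ := ih (insert x J) hxI
        (Finset.insert_subset (Finset.mem_insert_of_mem hx.1) hJs)
        (by rw [Finset.card_insert_of_notMem hx.2]; omega)
      exact ⟨J', h1, (Finset.subset_insert x J).trans h2, h3, h4⟩

/-- The key rank bound: if every element of `X` outside `S` cannot be added to `S`,
nor exchanged with any element of `S` outside `W`, then `rk X ≤ |W|`. -/
lemma FinMatroid.key (M : FinMatroid V) {S W X : Finset V} (hS : M.Indep S)
    (hWS : W ⊆ S)
    (hXW : ∀ a ∈ X, a ∈ S → a ∈ W)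
    (h1 : ∀ b ∈ X, b ∉ S → ¬ M.Indep (insert b S))
    (h2 : ∀ b ∈ X, b ∉ S → ∀ a ∈ S, a ∉ W → ¬ M.Indep (insert b (S.erase a))) :
    M.rk X ≤ W.card := by
  classical
  refine FinMatroid.rk_le ?_
  intro T hTX hTI
  by_contra hlt
  push_neg at hlt
  have hW : M.Indep W := M.indep_subset hS hWS
  obtain ⟨b, hb, hbI⟩ := M.indep_exchange hTI hW hlt
  rw [Finset.mem_sdiff] at hb
  have hbX : b ∈ X := hTX hb.1
  have hbS : b ∉ S := fun h => hb.2 (hXW b hbX h)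
  have hbW : b ∉ W := hb.2
  -- grow `insert b W` inside `insert b S`
  have hsub : insert b W ⊆ insert b S := Finset.insert_subset_insert b hWS
  obtain ⟨J', hJ'I, hJ'sub, hJ'S, hJ'card⟩ :=
    M.grow hS b S.card (insert b W) hbI hsub (by omega)
  have hbJ' : b ∈ J' := hJ'sub (Finset.mem_insert_self b W)
  have hcardbS : (insert b S).card = S.card + 1 := Finset.card_insert_of_notMem hbS
  have hJ'le : J'.card ≤ S.card + 1 := hcardbS ▸ Finset.card_le_card hJ'S
  rcases eq_or_lt_of_le hJ'le with heq | hlt'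
  · -- J' = insert b S
    have : J' = insert b S := Finset.eq_of_subset_of_card_le hJ'S (by omega)
    exact h1 b hbX hbS (this ▸ hJ'I)
  · -- J' misses exactly one element a of S
    have hJc : J'.card = S.card := by omega
    have hdiff : ((insert b S) \ J').card = 1 := by
      rw [Finset.card_sdiff_of_subset hJ'S]; omega
    obtain ⟨a, ha⟩ := Finset.card_eq_one.mp hdiff
    have haJ : a ∈ (insert b S) \ J' := ha ▸ Finset.mem_singleton_self a
    rw [Finset.mem_sdiff] at haJ
    have hab : a ≠ b := fun h => haJ.2 (h ▸ hbJ')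
    have haS : a ∈ S := by
      rcases Finset.mem_insert.mp haJ.1 with h | h
      · exact absurd h hab
      · exact h
    have haW : a ∉ W := fun h => haJ.2 (hJ'sub (Finset.mem_insert_of_mem h))
    -- J' ⊆ insert b (S.erase a) and cards equal
    have hsub2 : J' ⊆ insert b (S.erase a) := by
      intro y hy
      have hyS : y ∈ insert b S := hJ'S hy
      have hya : y ≠ a := fun h => haJ.2 (h ▸ hy)
      rcases Finset.mem_insert.mp hyS with h | h
      · rw [h]; exact Finset.mem_insert_self b _
      · exact Finset.mem_insert_of_mem (Finset.mem_erase.mpr ⟨hya, h⟩)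
    have hcard2 : (insert b (S.erase a)).card = S.card := by
      rw [Finset.card_insert_of_notMem (fun h => hbS (Finset.mem_of_mem_erase h)),
        Finset.card_erase_of_mem haS]
      have : 1 ≤ S.card := Finset.card_pos.mpr ⟨a, haS⟩
      omega
    have : J' = insert b (S.erase a) :=
      Finset.eq_of_subset_of_card_le hsub2 (by omega)
    exact h2 b hbX hbS a haS haW (this ▸ hJ'I)

/-- Cunningham's distance lemma: if every (s,t)-path in the exchange graph G(S)
has length at least 2ℓ+2 arcs, then |S| ≥ (1 - 1/(ℓ+1))·r, where r is the maximum
size of a common independent set. -/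
theorem cunningham_distance_lemma (M1 M2 : FinMatroid V) (S : Finset V) (r ℓ : ℕ)
    (hS1 : M1.Indep S) (hS2 : M2.Indep S)
    (hub : ∀ T : Finset V, M1.Indep T → M2.Indep T → T.card ≤ r)
    (hmax : ∃ T : Finset V, M1.Indep T ∧ M2.Indep T ∧ T.card = r)
    (hlen : ∀ (n : ℕ) (p : ℕ → V ⊕ Bool), p 0 = Sum.inr false → p n = Sum.inr true →
      (∀ i < n, ExArc M1 M2 S (p i) (p (i+1))) → 2 * ℓ + 2 ≤ n) :
    (1 - 1 / (ℓ + 1 : ℚ)) * r ≤ (S.card : ℚ) := by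
  classical
  obtain ⟨T, hT1, hT2, hTr⟩ := hmax
  -- the "ball of radius k" around s, intersected with V
  let near : ℕ → Finset V :=
    fun k => univ.filter (fun x => ∃ n ≤ k, ExReach M1 M2 S n (Sum.inl x))
  have mem_near : ∀ (k : ℕ) (x : V),
      x ∈ near k ↔ ∃ n ≤ k, ExReach M1 M2 S n (Sum.inl x) := by
    intro k x; simp [near]
  have near_mono : ∀ k, near k ⊆ near (k+1) := by
    intro k x hx
    rw [mem_near] at hx ⊢
    obtain ⟨n, hn, h⟩ := hx
    exact ⟨n, by omega, h⟩
  -- no t-arcs from near vertices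
  have no_t : ∀ (b : V), b ∉ S → b ∈ near (2*ℓ) → ¬ M2.Indep (insert b S) := by
    intro b hbS hb hI
    rw [mem_near] at hb
    obtain ⟨n, hn, hreach⟩ := hb
    have harc : ExArc M1 M2 S (Sum.inl b) (Sum.inr true) := ⟨hbS, hI⟩
    obtain ⟨p, hp0, hpn, hparc⟩ := exReach_succ hreach harc
    have := hlen (n+1) p hp0 hpn hparc
    omega
  -- main per-layer inequality
  have main : ∀ j < ℓ, r + (S ∩ near (2*j+1)).card ≤ S.card + (S ∩ near (2*j+2)).card := by
    intro j hj
    -- rk₂ of the ball ≤ |S ∩ near (2j+2)|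
    have hrk2 : M2.rk (near (2*j+1)) ≤ (S ∩ near (2*j+2)).card := by
      refine M2.key hS2 inter_subset_left ?_ ?_ ?_
      · intro a ha haS
        exact mem_inter.mpr ⟨haS, near_mono _ ha⟩
      · intro b hb hbS hI
        refine no_t b hbS ?_ hI
        rw [mem_near] at hb ⊢
        obtain ⟨n, hn, h⟩ := hb
        exact ⟨n, by omega, h⟩
      · intro b hb hbS a haS haW hI
        rw [mem_near] at hb
        obtain ⟨n, hn, hreach⟩ := hb
        have harc : ExArc M1 M2 S (Sum.inl b) (Sum.inl a) :=
          Or.inr ⟨hbS, haS, hI⟩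
        have : a ∈ near (2*j+2) := by
          rw [mem_near]
          exact ⟨n+1, by omega, exReach_succ hreach harc⟩
        exact haW (mem_inter.mpr ⟨haS, this⟩)
    -- rk₁ of the complement ≤ |S \ near (2j+1)|
    have hrk1 : M1.rk (univ \ near (2*j+1)) ≤ (S \ near (2*j+1)).card := by
      refine M1.key hS1 sdiff_subset ?_ ?_ ?_
      · intro a ha haS
        exact mem_sdiff.mpr ⟨haS, (mem_sdiff.mp ha).2⟩
      · intro b hb hbS hI
        have hb' : b ∉ near (2*j+1) := (mem_sdiff.mp hb).2
        refine hb' ?_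
        rw [mem_near]
        refine ⟨1, by omega, exReach_succ (exReach_zero M1 M2 S) ?_⟩
        exact ⟨hbS, hI⟩
      · intro b hb hbS a haS haW hI
        have hb' : b ∉ near (2*j+1) := (mem_sdiff.mp hb).2
        have ha' : a ∈ near (2*j+1) := by
          by_contra h
          exact haW (mem_sdiff.mpr ⟨haS, h⟩)
        rw [mem_near] at ha'
        obtain ⟨n, hn, hreach⟩ := ha'
        have heven : Even n := exReach_even_of_mem haS hreach
        have hn' : n ≤ 2*j := by
          rcases heven with ⟨k, hk⟩; omega
        have harc : ExArc M1 M2 S (Sum.inl a) (Sum.inl b) :=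
          Or.inl ⟨haS, hbS, hI⟩
        refine hb' ?_
        rw [mem_near]
        exact ⟨n+1, by omega, exReach_succ hreach harc⟩
    -- weak duality
    have hdual : r ≤ M2.rk (near (2*j+1)) + M1.rk (univ \ near (2*j+1)) := by
      have h1 : (T ∩ near (2*j+1)).card ≤ M2.rk (near (2*j+1)) :=
        FinMatroid.le_rk inter_subset_right (M2.indep_subset hT2 inter_subset_left)
      have h2 : (T \ near (2*j+1)).card ≤ M1.rk (univ \ near (2*j+1)) :=
        FinMatroid.le_rk (sdiff_subset_sdiff (subset_univ T) (Finset.Subset.refl _))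
          (M1.indep_subset hT1 sdiff_subset)
      have := Finset.card_inter_add_card_sdiff T (near (2*j+1))
      omega
    have hsplit := Finset.card_inter_add_card_sdiff S (near (2*j+1))
    omega
  -- telescoping induction
  have ind : ∀ i ≤ ℓ, i * r ≤ i * S.card + (S ∩ near (2*i)).card := by
    intro i
    induction i with
    | zero => intro _; simp
    | succ j ih =>
      intro hj
      have h1 := ih (by omega)
      have h2 := main j (by omega)
      have h3 : (S ∩ near (2*j)).card ≤ (S ∩ near (2*j+1)).card :=
        Finset.card_le_card (inter_subset_inter (Finset.Subset.refl S) (near_mono _))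
      have e1 : (j+1) * r = j * r + r := by ring
      have e2 : (j+1) * S.card = j * S.card + S.card := by ring
      have e3 : 2 * (j+1) = 2*j+2 := by omega
      rw [e1, e2, e3]
      linarith
  have hfin : ℓ * r ≤ (ℓ + 1) * S.card := by
    have h1 := ind ℓ (le_refl ℓ)
    have h2 : (S ∩ near (2*ℓ)).card ≤ S.card :=
      Finset.card_le_card inter_subset_left
    have : (ℓ + 1) * S.card = ℓ * S.card + S.card := by ring
    linarith
  -- conclude over ℚ
  have hq : (ℓ:ℚ) * r ≤ ((ℓ:ℚ) + 1) * S.card := by exact_mod_cast hfin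
  have hpos : (0:ℚ) < (ℓ:ℚ) + 1 := by positivity
  have heq : (1 - 1/((ℓ:ℚ)+1)) = (ℓ:ℚ)/((ℓ:ℚ)+1) := by field_simp; ring
  rw [heq, div_mul_eq_mul_div, div_le_iff₀ hpos]
  linarith
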